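/- Let A and B be n×m matrices with natural number entries (Fin n → Fin m → ℕ) such that A and B have the same row sums (Σ_j A(i,j) = Σ_j B(i,j) for every i) and the same column sums (Σ_i A(i,j) = Σ_i B(i,j) for every j). Then there exists a finite sequence of matrices with natural number entries A = A_0, A_1, …, A_T = B, each having the same row sums and the same column sums as A, such that for each t, A_{t+1} is obtained from A_t by a ring swap of length r_t with 1 ≤ r_t ≤ n whose rows i_1, …, i_{r_t} are pairwise distinct. -/

import Mathlib

/-- The cyclic successor on `Fin r`: `t ↦ t + 1 (mod r)`, so that the index
after `r` wraps around to `1` (i.e. `j_{r+1} := j_1`). -/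
def ringNext {r : ℕ} (t : Fin r) : Fin r :=
  ⟨((t : ℕ) + 1) % r, Nat.mod_lt _ t.pos⟩

/-- The matrix `∑ t, (E_{i t, j t} - E_{i t, j (t+1)})` of a ring swap,
where `E_{a,b}` is the matrix with a `1` at entry `(a, b)` and `0` elsewhere,
and `j (t+1)` is understood cyclically (`j_{r+1} := j_1`). -/
def ringSwapDelta {n m r : ℕ} (i : Fin r → Fin n) (j : Fin r → Fin m) :
    Fin n → Fin m → ℤ :=
  fun a b => ∑ t : Fin r,
    ((if i t = a ∧ j t = b then 1 else 0) -
     (if i t = a ∧ j (ringNext t) = b then 1 else 0))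

lemma ringNext_bijective {r : ℕ} : Function.Bijective (ringNext (r := r)) := by
  rw [Finite.injective_iff_bijective.symm]
  have key : ∀ u : Fin r, ((u : ℕ) + 1) % r = if (u : ℕ) + 1 = r then 0 else (u : ℕ) + 1 := by
    intro u
    rcases eq_or_ne ((u : ℕ) + 1) r with h | h
    · simp [h]
    · rw [if_neg h]; exact Nat.mod_eq_of_lt (by have := u.isLt; omega)
  intro s t h
  have h' : ((s : ℕ) + 1) % r = ((t : ℕ) + 1) % r := congrArg Fin.val h
  rw [key s, key t] at h'
  have hs := s.isLt; have ht := t.isLt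
  split_ifs at h' with h1 h2 <;> exact Fin.ext (by omega)

lemma sum_ringSwapDelta_row {n m r : ℕ} (i : Fin r → Fin n) (j : Fin r → Fin m) (a : Fin n) :
    ∑ b, ringSwapDelta i j a b = 0 := by
  unfold ringSwapDelta
  rw [Finset.sum_comm]
  refine Finset.sum_eq_zero fun t _ => ?_
  simp [Finset.sum_sub_distrib, ite_and]

lemma sum_ringSwapDelta_col {n m r : ℕ} (i : Fin r → Fin n) (j : Fin r → Fin m) (b : Fin m) :
    ∑ a, ringSwapDelta i j a b = 0 := by
  unfold ringSwapDelta
  rw [Finset.sum_comm]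
  have h : ∀ t : Fin r, (∑ a, ((if i t = a ∧ j t = b then (1:ℤ) else 0) -
      (if i t = a ∧ j (ringNext t) = b then 1 else 0)))
      = (if j t = b then 1 else 0) - (if j (ringNext t) = b then 1 else 0) := by
    intro t
    simp [Finset.sum_sub_distrib, ite_and]
  rw [Finset.sum_congr rfl fun t _ => h t, Finset.sum_sub_distrib]
  rw [Fintype.sum_bijective _ ringNext_bijective
    (fun t => if j (ringNext t) = b then (1:ℤ) else 0)
    (fun t => if j t = b then (1:ℤ) else 0) (fun t => rfl)]
  · simp
  -- maybe this needs the other direction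


lemma exists_lt_of_sum_eq {α : Type*} [Fintype α] (f g : α → ℕ)
    (h : ∑ x, f x = ∑ x, g x) (x : α) (hx : g x < f x) : ∃ y, f y < g y := by
  by_contra hc
  push_neg at hc
  have : ∑ x, g x < ∑ x, f x :=
    Finset.sum_lt_sum (fun i _ => hc i) ⟨x, Finset.mem_univ x, hx⟩
  omega

lemma step_lemma {n m : ℕ} (A B : Fin n → Fin m → ℕ)
    (hrow : ∀ a, ∑ b, A a b = ∑ b, B a b)
    (hcol : ∀ b, ∑ a, A a b = ∑ a, B a b)
    (hne : A ≠ B) :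
    ∃ A' : Fin n → Fin m → ℕ,
      (∑ p : Fin n × Fin m, ((A' p.1 p.2 : ℤ) - B p.1 p.2).natAbs)
        < (∑ p : Fin n × Fin m, ((A p.1 p.2 : ℤ) - B p.1 p.2).natAbs) ∧
      2 ≤ n ∧
      ∃ (i : Fin 2 → Fin n) (j : Fin 2 → Fin m),
        Function.Injective i ∧ (∀ s, j s ≠ j (ringNext s)) ∧
        ∀ a b, (A' a b : ℤ) = A a b + ringSwapDelta i j a b := by
  -- find (a, b) with B a b < A a b
  obtain ⟨a, b, hab⟩ : ∃ a b, B a b < A a b := by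
    obtain ⟨a, b0, h0⟩ : ∃ a b, A a b ≠ B a b := by
      by_contra h
      push_neg at h
      exact hne (funext fun a => funext fun b => h a b)
    rcases Nat.lt_or_ge (B a b0) (A a b0) with h | h
    · exact ⟨a, b0, h⟩
    · obtain ⟨y, hy⟩ := exists_lt_of_sum_eq (B a) (A a) (hrow a).symm b0 (by omega)
      exact ⟨a, y, hy⟩
  obtain ⟨b', hb'⟩ : ∃ b', A a b' < B a b' := exists_lt_of_sum_eq (A a) (B a) (hrow a) b hab
  obtain ⟨a', ha'⟩ : ∃ a', B a' b' < A a' b' :=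
    exists_lt_of_sum_eq (fun x => B x b') (fun x => A x b') (hcol b').symm a hb'
  have hbb' : b ≠ b' := by rintro rfl; omega
  have haa' : a ≠ a' := by rintro rfl; omega
  have hn2 : 2 ≤ n := by
    have h1 := a.isLt; have h2 := a'.isLt
    have : (a : ℕ) ≠ (a' : ℕ) := fun h => haa' (Fin.ext h)
    omega
  set A' : Fin n → Fin m → ℕ := fun x y =>
    if a = x ∧ b = y then A x y - 1
    else if a = x ∧ b' = y then A x y + 1
    else if a' = x ∧ b' = y then A x y - 1
    else if a' = x ∧ b = y then A x y + 1
    else A x y with hA'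
  set i : Fin 2 → Fin n := fun t => if t = 0 then a else a' with hi
  set j : Fin 2 → Fin m := fun t => if t = 0 then b' else b with hj
  have hδ : ∀ x y, ringSwapDelta i j x y =
      ((if a = x ∧ b' = y then 1 else 0) - (if a = x ∧ b = y then 1 else 0)) +
      ((if a' = x ∧ b = y then 1 else 0) - (if a' = x ∧ b' = y then (1:ℤ) else 0)) := by
    intro x y
    have h0 : ringNext (0 : Fin 2) = 1 := rfl
    have h1 : ringNext (1 : Fin 2) = 0 := rfl
    unfold ringSwapDelta
    rw [Fin.sum_univ_two]
    simp only [hi, hj, h0, h1, if_pos rfl, if_neg (by decide : ¬(1 : Fin 2) = 0)]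
  have hkey : ∀ x y, (A' x y : ℤ) = A x y + ringSwapDelta i j x y := by
    intro x y
    rw [hδ x y, hA']
    rcases eq_or_ne a x with rfl | hax
    · rcases eq_or_ne b y with rfl | hby
      · simp [hbb'.symm, haa'.symm]; omega
      · rcases eq_or_ne b' y with rfl | hby'
        · simp [hbb', haa'.symm]
        · simp [hby, hby', haa'.symm]
    · rcases eq_or_ne a' x with rfl | hax'
      · rcases eq_or_ne b y with rfl | hby
        · simp [hax, hbb'.symm]
        · rcases eq_or_ne b' y with rfl | hby'
          · simp [hax, hbb']; omega
          · simp [hax, hby, hby']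
      · simp [hax, hax']
  have hinj : Function.Injective i := by
    intro s t hst
    fin_cases s <;> fin_cases t <;> simp_all [hi] <;>
      first
        | rfl
        | exact absurd hst haa'
        | exact absurd hst.symm haa'
  have hjne : ∀ s, j s ≠ j (ringNext s) := by
    intro s
    fin_cases s <;>
      simp [hj, (by rfl : ringNext (0 : Fin 2) = 1), (by rfl : ringNext (1 : Fin 2) = 0),
        (by decide : (1 : Fin 2) ≠ 0)] <;>
      first | exact hbb'.symm | exact hbb' | exact ⟨by decide, hbb'.symm⟩ | exact ⟨by decide, hbb'⟩
  -- values of A' at the four special points, and elsewhere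
  have hv1 : (A' a b : ℤ) = A a b - 1 := by simp [hA', hbb'.symm]; omega
  have hv2 : (A' a b' : ℤ) = A a b' + 1 := by simp [hA', hbb']
  have hv3 : (A' a' b' : ℤ) = A a' b' - 1 := by simp [hA', haa', hbb']; omega
  have hv4 : (A' a' b : ℤ) = A a' b + 1 := by simp [hA', haa', hbb'.symm]
  have hother : ∀ x y, ¬(a = x ∧ b = y) → ¬(a = x ∧ b' = y) → ¬(a' = x ∧ b' = y) →
      ¬(a' = x ∧ b = y) → A' x y = A x y := by
    intro x y h1 h2 h3 h4
    rw [hA']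
    simp only [if_neg h1, if_neg h2, if_neg h3, if_neg h4]
  refine ⟨A', ?_, hn2, i, j, hinj, hjne, hkey⟩
  -- distance strictly decreases
  classical
  set f : Fin n × Fin m → ℕ := fun p => ((A p.1 p.2 : ℤ) - B p.1 p.2).natAbs with hf
  set g : Fin n × Fin m → ℕ := fun p => ((A' p.1 p.2 : ℤ) - B p.1 p.2).natAbs with hg
  show ∑ p, g p < ∑ p, f p
  have hq0 : ((a', b) : Fin n × Fin m) ∈ Finset.univ := Finset.mem_univ _
  have hne01 : ((a, b) : Fin n × Fin m) ≠ (a', b) := by simp [haa']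
  have hq1 : ((a, b) : Fin n × Fin m) ∈ Finset.univ.erase (a', b) :=
    Finset.mem_erase.2 ⟨hne01, Finset.mem_univ _⟩
  rw [← Finset.add_sum_erase _ g hq0, ← Finset.add_sum_erase _ g hq1,
      ← Finset.add_sum_erase _ f hq0, ← Finset.add_sum_erase _ f hq1]
  have e1 : g (a', b) ≤ f (a', b) + 1 := by
    simp only [hg, hf]
    omega
  have e2 : g (a, b) + 1 = f (a, b) := by
    simp only [hg, hf]
    have hab' : (B a b : ℤ) < A a b := by exact_mod_cast hab
    omega
  have e3 : ∑ p ∈ (Finset.univ.erase ((a', b) : Fin n × Fin m)).erase (a, b), g p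
      < ∑ p ∈ (Finset.univ.erase ((a', b) : Fin n × Fin m)).erase (a, b), f p := by
    refine Finset.sum_lt_sum ?_ ?_
    · rintro ⟨x, y⟩ hp
      have hp1 : ((x, y) : Fin n × Fin m) ≠ (a, b) := (Finset.mem_erase.1 hp).1
      have hp0 : ((x, y) : Fin n × Fin m) ≠ (a', b) :=
        (Finset.mem_erase.1 (Finset.mem_erase.1 hp).2).1
      by_cases h2 : a = x ∧ b' = y
      · obtain ⟨rfl, rfl⟩ := h2
        simp only [hg, hf]
        have hb'' : (A a b' : ℤ) < B a b' := by exact_mod_cast hb'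
        omega
      · by_cases h3 : a' = x ∧ b' = y
        · obtain ⟨rfl, rfl⟩ := h3
          simp only [hg, hf]
          have ha'' : (B a' b' : ℤ) < A a' b' := by exact_mod_cast ha'
          omega
        · have heq : A' x y = A x y := by
            refine hother x y ?_ h2 h3 ?_
            · rintro ⟨rfl, rfl⟩; exact hp1 rfl
            · rintro ⟨rfl, rfl⟩; exact hp0 rfl
          simp only [hg, hf, heq]
          exact le_refl _
    · refine ⟨(a, b'), ?_, ?_⟩
      · refine Finset.mem_erase.2 ⟨?_, Finset.mem_erase.2 ⟨?_, Finset.mem_univ _⟩⟩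
        · simp [hbb'.symm]
        · simp [haa']
      · simp only [hg, hf]
        have hb'' : (A a b' : ℤ) < B a b' := by exact_mod_cast hb'
        omega
  omega


lemma margins_of_swap {n m r : ℕ} (X Y : Fin n → Fin m → ℕ)
    (i : Fin r → Fin n) (j : Fin r → Fin m)
    (h : ∀ a b, (Y a b : ℤ) = X a b + ringSwapDelta i j a b) :
    (∀ a, ∑ b, Y a b = ∑ b, X a b) ∧ (∀ b, ∑ a, Y a b = ∑ a, X a b) := by
  constructor
  · intro a
    have : (∑ b, (Y a b : ℤ)) = ∑ b, (X a b : ℤ) := by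
      rw [Finset.sum_congr rfl fun b _ => h a b, Finset.sum_add_distrib,
        sum_ringSwapDelta_row, add_zero]
    exact_mod_cast this
  · intro b
    have : (∑ a, (Y a b : ℤ)) = ∑ a, (X a b : ℤ) := by
      rw [Finset.sum_congr rfl fun a _ => h a b, Finset.sum_add_distrib,
        sum_ringSwapDelta_col, add_zero]
    exact_mod_cast this

lemma connect_aux {n m : ℕ} (B : Fin n → Fin m → ℕ) :
    ∀ d (A : Fin n → Fin m → ℕ),
      (∑ p : Fin n × Fin m, ((A p.1 p.2 : ℤ) - B p.1 p.2).natAbs) = d →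
      (∀ a, ∑ b, A a b = ∑ b, B a b) →
      (∀ b, ∑ a, A a b = ∑ a, B a b) →
      ∃ (T : ℕ) (F : ℕ → Fin n → Fin m → ℕ),
        F 0 = A ∧ F T = B ∧
        (∀ t ≤ T, (∀ a, ∑ b, F t a b = ∑ b, B a b) ∧
                  (∀ b, ∑ a, F t a b = ∑ a, B a b)) ∧
        (∀ t < T, ∃ (r : ℕ), 1 ≤ r ∧ r ≤ n ∧
          ∃ (i : Fin r → Fin n) (j : Fin r → Fin m),
            Function.Injective i ∧
            (∀ s, j s ≠ j (ringNext s)) ∧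
            (∀ a b, (F (t + 1) a b : ℤ)
              = (F t a b : ℤ) + ringSwapDelta i j a b)) := by
  intro d
  induction d using Nat.strong_induction_on with
  | _ d ih =>
    intro A hd hrow hcol
    by_cases hAB : A = B
    · subst hAB
      exact ⟨0, fun _ => A, rfl, rfl, fun t _ => ⟨fun _ => rfl, fun _ => rfl⟩,
        fun t ht => absurd ht (Nat.not_lt_zero t)⟩
    · obtain ⟨A', hlt, hn2, i, j, hi, hj, hk⟩ := step_lemma A B hrow hcol hAB
      have hmarg := margins_of_swap A A' i j hk
      rw [hd] at hlt
      obtain ⟨T, F, hF0, hFT, hmar, hswap⟩ := ih _ hlt A' rfl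
        (fun a => (hmarg.1 a).trans (hrow a)) (fun b => (hmarg.2 b).trans (hcol b))
      refine ⟨T + 1, fun t => match t with | 0 => A | Nat.succ s => F s, rfl, hFT, ?_, ?_⟩
      · intro t ht
        match t with
        | 0 => exact ⟨hrow, hcol⟩
        | Nat.succ s => exact hmar s (by omega)
      · intro t ht
        match t with
        | 0 =>
          refine ⟨2, by omega, hn2, i, j, hi, hj, ?_⟩
          intro a b
          show (F 0 a b : ℤ) = A a b + ringSwapDelta i j a b
          rw [hF0]; exact hk a b
        | Nat.succ s =>
          obtain ⟨r, hr1, hr2, i', j', hi', hj', hk'⟩ := hswap s (by omega)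
          exact ⟨r, hr1, hr2, i', j', hi', hj', hk'⟩

/-- **Ring swaps connect nonnegative integer matrices with equal margins.**
If `A B : Fin n → Fin m → ℕ` have the same row sums and the same column sums,
then there is a finite sequence of natural-number matrices
`A = F 0, F 1, …, F T = B`, each with the same row and column sums as `A`,
such that each `F (t+1)` is obtained from `F t` by a single ring swap of some
length `r` with `1 ≤ r ≤ n` whose rows are pairwise distinct (and whose
consecutive columns differ cyclically). -/
theorem ring_swaps_connect_equal_margin_matrices
    {n m : ℕ} (A B : Fin n → Fin m → ℕ)
    (hrow : ∀ a, ∑ b, A a b = ∑ b, B a b)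
    (hcol : ∀ b, ∑ a, A a b = ∑ a, B a b) :
    ∃ (T : ℕ) (F : ℕ → Fin n → Fin m → ℕ),
      F 0 = A ∧ F T = B ∧
      (∀ t ≤ T, (∀ a, ∑ b, F t a b = ∑ b, A a b) ∧
                (∀ b, ∑ a, F t a b = ∑ a, A a b)) ∧
      (∀ t < T, ∃ (r : ℕ), 1 ≤ r ∧ r ≤ n ∧
        ∃ (i : Fin r → Fin n) (j : Fin r → Fin m),
          Function.Injective i ∧
          (∀ s, j s ≠ j (ringNext s)) ∧
          (∀ a b, (F (t + 1) a b : ℤ)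
            = (F t a b : ℤ) + ringSwapDelta i j a b)) := by
  obtain ⟨T, F, h0, h1, h2, h3⟩ := connect_aux B _ A rfl hrow hcol
  refine ⟨T, F, h0, h1, fun t ht => ⟨?_, ?_⟩, h3⟩
  · exact fun a => ((h2 t ht).1 a).trans (hrow a).symm
  · exact fun b => ((h2 t ht).2 b).trans (hcol b).symm
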